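/- For n ≥ 3, the commutator subgroup [B_n, B_n], with the restriction of the Dehornoy ordering, has no least positive element; hence the Dehornoy order restricted to [B_n, B_n] is dense. -/

import Mathlib

/-- The braid relations on generators indexed by `Fin m` (generator `i` is `σ_{i+1}`). -/
def braidRels (m : ℕ) : Set (FreeGroup (Fin m)) :=
  {r | (∃ i j : Fin m, (i : ℕ) + 1 < (j : ℕ) ∧
        r = FreeGroup.of i * FreeGroup.of j * (FreeGroup.of i)⁻¹ * (FreeGroup.of j)⁻¹) ∨
       (∃ i j : Fin m, (i : ℕ) + 1 = (j : ℕ) ∧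
        r = FreeGroup.of i * FreeGroup.of j * FreeGroup.of i *
            (FreeGroup.of j * FreeGroup.of i * FreeGroup.of j)⁻¹)}

/-- The Artin braid group `B_n`, presented with generators `σ₁, …, σ_{n-1}`. -/
abbrev BraidGroup (n : ℕ) := PresentedGroup (braidRels (n - 1))

/-- The Artin generator; `braidGen i` represents `σ_{i+1}`. -/
def braidGen {n : ℕ} (i : Fin (n - 1)) : BraidGroup n := PresentedGroup.of i

/-- `σ_k` (1-indexed), or `1` if out of range. -/
def sigma' (n k : ℕ) : BraidGroup n :=
  if h : k - 1 < n - 1 then braidGen ⟨k - 1, h⟩ else 1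

/-- A braid is `i`-positive (`i : Fin (n-1)` standing for `σ_{i+1}`) if it is represented by
a word using only generators of index ≤ i, in which generator `i` occurs, and only with
positive exponent. -/
def IsIPositive {n : ℕ} (β : BraidGroup n) (i : Fin (n - 1)) : Prop :=
  ∃ w : FreeGroup (Fin (n - 1)), PresentedGroup.mk (braidRels (n - 1)) w = β ∧
    (∀ l ∈ w.toWord, l.1 ≤ i ∧ (l.1 = i → l.2 = true)) ∧ (∃ l ∈ w.toWord, l.1 = i)

/-- A braid is `i`-negative if its inverse is `i`-positive. -/
def IsINegative {n : ℕ} (β : BraidGroup n) (i : Fin (n - 1)) : Prop :=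
  IsIPositive β⁻¹ i

/-- Dehornoy-positive braids: `i`-positive for some `i`. -/
def DPos {n : ℕ} (β : BraidGroup n) : Prop := ∃ i, IsIPositive β i

/-- The Dehornoy ordering on `B_n`. -/
def DLt {n : ℕ} (a b : BraidGroup n) : Prop := DPos (a⁻¹ * b)

/-- The copy of `B_r` inside `B_n` generated by `σ₁, …, σ_{r-1}`. -/
def braidSub (n r : ℕ) : Subgroup (BraidGroup n) :=
  Subgroup.closure {β | ∃ i : Fin (n - 1), (i : ℕ) < r - 1 ∧ β = braidGen i}

/-- `σ_a σ_{a-1} ⋯ σ_b` (1-indexed). -/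
def descSeg (n a b : ℕ) : BraidGroup n :=
  (((List.range (a - b + 1)).map fun j => sigma' n (a - j)).prod)

/-- The Garside half twist `Δ_k = (σ_{k-1}⋯σ₁)(σ_{k-1}⋯σ₂)⋯(σ_{k-1}σ_{k-2})(σ_{k-1})`
viewed in `B_n`. -/
def Delta (n k : ℕ) : BraidGroup n :=
  (((List.range (k - 1)).map fun m => descSeg n (k - 1) (m + 1)).prod)


section ListHelpers

variable {α : Type*} [DecidableEq α]

/-- Signed count of occurrences of the generator `i` in a word. -/
def cnti (i : α) (L : List (α × Bool)) : ℤ :=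
  (L.map fun l => if l.1 = i then (if l.2 then (1:ℤ) else -1) else 0).sum

theorem cnti_cons (i : α) (x : α × Bool) (L : List (α × Bool)) :
    cnti i (x :: L) = (if x.1 = i then (if x.2 then (1:ℤ) else -1) else 0) + cnti i L := by
  simp [cnti]

/-- The counting homomorphism. -/
def phi (i : α) : FreeGroup α →* Multiplicative ℤ :=
  FreeGroup.lift (fun j => Multiplicative.ofAdd (if j = i then (1:ℤ) else 0))

theorem phi_mk (i : α) (L : List (α × Bool)) :
    phi i (FreeGroup.mk L) = Multiplicative.ofAdd (cnti i L) := by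
  rw [phi, FreeGroup.lift_mk]
  induction L with
  | nil => simp [cnti]
  | cons x L ih =>
      rw [List.map_cons, List.prod_cons, ih, cnti_cons, ofAdd_add]
      congr 1
      rcases x with ⟨a, b⟩
      cases b <;> by_cases h : a = i <;> simp [h]

theorem cnti_invariant (i : α) (L : List (α × Bool)) :
    cnti i (FreeGroup.toWord (FreeGroup.mk L)) = cnti i L := by
  have h1 := phi_mk i (FreeGroup.toWord (FreeGroup.mk L))
  rw [FreeGroup.mk_toWord, phi_mk] at h1
  exact Multiplicative.ofAdd.injective h1.symm

theorem cnti_nonneg (i : α) (L : List (α × Bool))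
    (h1 : ∀ l ∈ L, l.1 = i → l.2 = true) : 0 ≤ cnti i L := by
  induction L with
  | nil => simp [cnti]
  | cons x L ih =>
      rw [cnti_cons]
      have hx : (0:ℤ) ≤ (if x.1 = i then (if x.2 then (1:ℤ) else -1) else 0) := by
        by_cases h : x.1 = i
        · rw [h1 x List.mem_cons_self h]; simp [h]
        · simp [h]
      have := ih (fun l hl => h1 l (List.mem_cons_of_mem x hl))
      omega

theorem cnti_pos (i : α) (L : List (α × Bool))
    (h1 : ∀ l ∈ L, l.1 = i → l.2 = true) (h2 : ∃ l ∈ L, l.1 = i) :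
    1 ≤ cnti i L := by
  induction L with
  | nil => simp at h2
  | cons x L ih =>
      rw [cnti_cons]
      have htail : ∀ l ∈ L, l.1 = i → l.2 = true :=
        fun l hl => h1 l (List.mem_cons_of_mem x hl)
      by_cases h : x.1 = i
      · rw [h1 x List.mem_cons_self h]
        simp only [h, if_true]
        have := cnti_nonneg i L htail
        omega
      · simp only [h, if_false, zero_add]
        apply ih htail
        rcases h2 with ⟨l, hl, hli⟩
        rcases List.mem_cons.1 hl with rfl | hl
        · exact absurd hli h
        · exact ⟨l, hl, hli⟩

theorem cnti_zero (i : α) (L : List (α × Bool)) (h : ∀ l ∈ L, l.1 ≠ i) :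
    cnti i L = 0 := by
  induction L with
  | nil => simp [cnti]
  | cons x L ih =>
      rw [cnti_cons, ih (fun l hl => h l (List.mem_cons_of_mem x hl))]
      simp [h x List.mem_cons_self]

theorem exists_of_cnti_pos (i : α) (L : List (α × Bool)) (h : 1 ≤ cnti i L) :
    ∃ l ∈ L, l.1 = i := by
  by_contra hc
  push_neg at hc
  rw [cnti_zero i L hc] at h
  omega

theorem mem_of_mem_toWord_mk {L : List (α × Bool)} {l : α × Bool}
    (h : l ∈ FreeGroup.toWord (FreeGroup.mk L)) : l ∈ L := by
  rw [FreeGroup.toWord_mk] at h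
  exact (FreeGroup.Red.sublist FreeGroup.reduce.red).subset h

omit [DecidableEq α] in
theorem mem_invRev {L : List (α × Bool)} {l : α × Bool} (h : l ∈ FreeGroup.invRev L) :
    (l.1, !l.2) ∈ L := by
  rw [FreeGroup.invRev] at h
  rcases List.mem_map.1 (List.mem_reverse.1 h) with ⟨x, hx, rfl⟩
  simpa using hx

omit [DecidableEq α] in
theorem split_first {p : α × Bool → Prop} [DecidablePred p] {L : List (α × Bool)}
    (h : ∃ l ∈ L, p l) : ∃ A x B, L = A ++ x :: B ∧ p x ∧ ∀ l ∈ A, ¬ p l := by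
  induction L with
  | nil => simp at h
  | cons y L ih =>
      by_cases hy : p y
      · exact ⟨[], y, L, by simp, hy, by simp⟩
      · have hL : ∃ l ∈ L, p l := by
          rcases h with ⟨l, hl, hpl⟩
          rcases List.mem_cons.1 hl with rfl | hl
          · exact absurd hpl hy
          · exact ⟨l, hl, hpl⟩
        rcases ih hL with ⟨A, x, B, rfl, hx, hA⟩
        refine ⟨y :: A, x, B, by simp, hx, ?_⟩
        intro l hl
        rcases List.mem_cons.1 hl with rfl | hl
        · exact hy
        · exact hA l hl

end ListHelpers

namespace BraidAux

open scoped commutatorElement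

variable {m : ℕ}

abbrev pib (m : ℕ) : FreeGroup (Fin m) →* PresentedGroup (braidRels m) :=
  PresentedGroup.mk (braidRels m)

theorem rel_one {r : FreeGroup (Fin m)} (hr : r ∈ braidRels m) : pib m r = 1 :=
  (QuotientGroup.eq_one_iff r).2 (Subgroup.subset_normalClosure hr)

theorem braid2 (i j : Fin m) (h : (i : ℕ) + 1 = (j : ℕ)) :
    (PresentedGroup.of (rels := braidRels m) i) * PresentedGroup.of j * PresentedGroup.of i =
      PresentedGroup.of j * PresentedGroup.of i * PresentedGroup.of j := by
  have hr : (FreeGroup.of i * FreeGroup.of j * FreeGroup.of i *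
      (FreeGroup.of j * FreeGroup.of i * FreeGroup.of j)⁻¹) ∈ braidRels m :=
    Or.inr ⟨i, j, h, rfl⟩
  have h1 := rel_one hr
  simp only [map_mul, map_inv] at h1
  exact mul_inv_eq_one.1 h1

theorem pi_mk_append (L1 L2 : List (Fin m × Bool)) :
    pib m (FreeGroup.mk (L1 ++ L2)) = pib m (FreeGroup.mk L1) * pib m (FreeGroup.mk L2) := by
  rw [← FreeGroup.mul_mk, map_mul]

theorem pi_mk_inv (L : List (Fin m × Bool)) :
    pib m (FreeGroup.mk (FreeGroup.invRev L)) = (pib m (FreeGroup.mk L))⁻¹ := by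
  rw [← FreeGroup.inv_mk, map_inv]

theorem pi_mk_pos (a : Fin m) : pib m (FreeGroup.mk [(a, true)]) = PresentedGroup.of a := rfl

theorem pi_mk_neg (a : Fin m) :
    pib m (FreeGroup.mk [(a, false)]) = (PresentedGroup.of (rels := braidRels m) a)⁻¹ := by
  have h1 : FreeGroup.mk [(a, false)] = (FreeGroup.of a : FreeGroup (Fin m))⁻¹ := by
    rw [show (FreeGroup.of a : FreeGroup (Fin m)) = FreeGroup.mk [(a, true)] from rfl,
      FreeGroup.inv_mk]
    simp [FreeGroup.invRev]
  rw [h1, map_inv]; rfl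

/-- The exponent-sum homomorphism. -/
def esum (m : ℕ) : PresentedGroup (braidRels m) →* Multiplicative ℤ :=
  PresentedGroup.toGroup (f := fun _ => Multiplicative.ofAdd (1 : ℤ))
    (by
      rintro r (⟨i, j, hij, rfl⟩ | ⟨i, j, hij, rfl⟩) <;>
        simp only [map_mul, map_inv, FreeGroup.lift_apply_of] <;> group)

def ecnt (L : List (Fin m × Bool)) : ℤ := (L.map fun l => if l.2 then (1:ℤ) else -1).sum

theorem esum_mk (L : List (Fin m × Bool)) :
    esum m (pib m (FreeGroup.mk L)) = Multiplicative.ofAdd (ecnt L) := by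
  have h0 : esum m (pib m (FreeGroup.mk L)) =
      FreeGroup.lift (fun _ => Multiplicative.ofAdd (1:ℤ)) (FreeGroup.mk L) := rfl
  rw [h0, FreeGroup.lift_mk]
  clear h0
  induction L with
  | nil => simp [ecnt]
  | cons x L ih =>
      have hc : ecnt (x :: L) = (if x.2 then (1:ℤ) else -1) + ecnt L := by simp [ecnt]
      rw [List.map_cons, List.prod_cons, ih, hc, ofAdd_add]
      congr 1
      cases x.2 <;> simp

theorem ecnt_all_pos {L : List (Fin m × Bool)} (h : ∀ l ∈ L, l.2 = true) :
    ecnt L = L.length := by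
  induction L with
  | nil => simp [ecnt]
  | cons x L ih =>
      have hc : ecnt (x :: L) = (if x.2 then (1:ℤ) else -1) + ecnt L := by simp [ecnt]
      rw [hc, h x List.mem_cons_self, ih (fun l hl => h l (List.mem_cons_of_mem x hl))]
      simp only [List.length_cons]
      push_cast
      ring

theorem esum_commutator {β : PresentedGroup (braidRels m)}
    (hβ : β ∈ commutator (PresentedGroup (braidRels m))) : esum m β = 1 :=
  Abelianization.commutator_subset_ker (esum m) hβ

theorem sig_diff_mem (h0 : 0 < m) (i : Fin m) :
    (PresentedGroup.of (rels := braidRels m) i) * (PresentedGroup.of ⟨0, h0⟩)⁻¹ ∈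
      commutator (PresentedGroup (braidRels m)) := by
  obtain ⟨k, hk⟩ := i
  induction k with
  | zero => simpa using one_mem _
  | succ k ih =>
      have hk' : k < m := by omega
      have hrel := braid2 (m := m) ⟨k, hk'⟩ ⟨k + 1, hk⟩ rfl
      set a := PresentedGroup.of (rels := braidRels m) ⟨k, hk'⟩ with ha
      set b := PresentedGroup.of (rels := braidRels m) ⟨k + 1, hk⟩ with hb
      have hba : b * a⁻¹ = ⁅a * b, a⁆ := by
        calc b * a⁻¹ = (b * a * b) * b⁻¹ * a⁻¹ * a⁻¹ := by group
        _ = (a * b * a) * b⁻¹ * a⁻¹ * a⁻¹ := by rw [hrel]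
        _ = ⁅a * b, a⁆ := by rw [commutatorElement_def]; group
      have h1 : b * (PresentedGroup.of (rels := braidRels m) ⟨0, h0⟩)⁻¹ =
          (b * a⁻¹) * (a * (PresentedGroup.of ⟨0, h0⟩)⁻¹) := by group
      rw [h1]
      exact mul_mem
        (hba ▸ Subgroup.commutator_mem_commutator (Subgroup.mem_top _) (Subgroup.mem_top _))
        (ih hk')

theorem conj_form_mem (h0 : 0 < m) (g s : PresentedGroup (braidRels m))
    (hs : s * (PresentedGroup.of (rels := braidRels m) ⟨0, h0⟩)⁻¹ ∈
      commutator (PresentedGroup (braidRels m))) :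
    g * s * g⁻¹ * (PresentedGroup.of (rels := braidRels m) ⟨0, h0⟩)⁻¹ ∈
      commutator (PresentedGroup (braidRels m)) := by
  have h1 : g * s * g⁻¹ * (PresentedGroup.of (rels := braidRels m) ⟨0, h0⟩)⁻¹ =
      ⁅g, s⁆ * (s * (PresentedGroup.of ⟨0, h0⟩)⁻¹) := by
    rw [commutatorElement_def]; group
  rw [h1]
  exact mul_mem
    (Subgroup.commutator_mem_commutator (Subgroup.mem_top _) (Subgroup.mem_top _)) hs

end BraidAux

namespace BraidAux

theorem ipos_of_word {n : ℕ} (i : Fin (n - 1)) (W : List (Fin (n - 1) × Bool))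
    (h1 : ∀ l ∈ W, l.1 ≤ i ∧ (l.1 = i → l.2 = true)) (h2 : ∃ l ∈ W, l.1 = i) :
    IsIPositive (pib (n - 1) (FreeGroup.mk W)) i := by
  refine ⟨FreeGroup.mk W, rfl, ?_, ?_⟩
  · intro l hl
    exact h1 l (mem_of_mem_toWord_mk hl)
  · apply exists_of_cnti_pos
    rw [cnti_invariant]
    exact cnti_pos i W (fun l hl => (h1 l hl).2) h2

theorem core {n : ℕ} (hn : 3 ≤ n)
    (htri : ∀ a : BraidGroup n,
      (a = 1 ∧ ¬DPos a ∧ ¬DPos a⁻¹) ∨ (DPos a ∧ a ≠ 1 ∧ ¬DPos a⁻¹) ∨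
      (DPos a⁻¹ ∧ a ≠ 1 ∧ ¬DPos a))
    {β : BraidGroup n} (hβ : β ∈ commutator (BraidGroup n)) (hp : DPos β) :
    ∃ γ : BraidGroup n, γ ∈ commutator (BraidGroup n) ∧ DPos γ ∧ DPos (γ⁻¹ * β) := by
  obtain ⟨i, w, hw, hlet, hex⟩ := hp
  have h0 : 0 < n - 1 := by omega
  by_cases hi0 : (i : ℕ) = 0
  · -- impossible: exponent sum of a 0-positive braid is its word length > 0
    exfalso
    have hall : ∀ l ∈ w.toWord, l.2 = true := by
      intro l hl
      have h := hlet l hl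
      apply h.2
      have hv : (l.1 : ℕ) = (i : ℕ) := by
        have := h.1; rw [Fin.le_def, hi0] at this; omega
      exact Fin.ext hv
    have hlen : w.toWord ≠ [] := by
      rcases hex with ⟨l, hl, -⟩; exact List.ne_nil_of_mem hl
    have h1 : esum (n - 1) β = 1 := esum_commutator hβ
    have h2 : β = pib (n - 1) (FreeGroup.mk w.toWord) := by
      rw [FreeGroup.mk_toWord]; exact hw.symm
    rw [h2, esum_mk, ecnt_all_pos hall] at h1
    have h3 : ((w.toWord.length : ℤ)) = 0 := by
      simpa using congrArg Multiplicative.toAdd h1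
    have := List.length_eq_zero_iff.1 (by exact_mod_cast h3)
    exact hlen this
  · -- main case : 1 ≤ i
    have hi1 : 1 ≤ (i : ℕ) := by omega
    obtain ⟨A, x, B, hLAB, hxi, hA⟩ :=
      split_first (p := fun l => l.1 = i) hex
    have hxmem : x ∈ w.toWord := by
      rw [hLAB]; exact List.mem_append_right _ List.mem_cons_self
    have hx2 : x.2 = true := (hlet x hxmem).2 hxi
    have hx : x = (i, true) := Prod.ext hxi hx2
    subst hx
    -- abbreviations
    set i0 : Fin (n - 1) := ⟨0, h0⟩ with hi0def
    set s1 : BraidGroup n := PresentedGroup.of i0 with hs1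
    set s : BraidGroup n := PresentedGroup.of i with hs
    set g : BraidGroup n := pib (n - 1) (FreeGroup.mk A) with hg
    set b : BraidGroup n := pib (n - 1) (FreeGroup.mk B) with hb
    have hβeq : β = g * (s * b) := by
      have h2 : w = FreeGroup.mk (A ++ ([(i, true)] ++ B)) := by
        rw [show A ++ ([(i, true)] ++ B) = A ++ (i, true) :: B by simp, ← hLAB,
          FreeGroup.mk_toWord]
      rw [← hw, h2, pi_mk_append, pi_mk_append, pi_mk_pos]
    -- letter facts
    have hAle : ∀ l ∈ A, l.1 ≤ i ∧ l.1 ≠ i := by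
      intro l hl
      refine ⟨(hlet l ?_).1, hA l hl⟩
      rw [hLAB]; exact List.mem_append_left _ hl
    have hBle : ∀ l ∈ B, l.1 ≤ i ∧ (l.1 = i → l.2 = true) := by
      intro l hl
      exact hlet l (by rw [hLAB]; exact List.mem_append_right _ (List.mem_cons_of_mem _ hl))
    have hiA : ∀ l ∈ FreeGroup.invRev A, l.1 ≤ i ∧ l.1 ≠ i := by
      intro l hl
      have := hAle _ (mem_invRev hl)
      exact this
    have hi0le : i0 ≤ i := by rw [Fin.le_def]; simp [hi0def]
    have hi0ne : i0 ≠ i := by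
      intro h; apply hi0; rw [← h]
    -- the basic conjugate γ4 = g s g⁻¹ s1⁻¹
    set W4 : List (Fin (n - 1) × Bool) :=
      A ++ ([(i, true)] ++ (FreeGroup.invRev A ++ [(i0, false)])) with hW4def
    have hW4 : pib (n - 1) (FreeGroup.mk W4) = g * s * g⁻¹ * s1⁻¹ := by
      rw [hW4def, pi_mk_append, pi_mk_append, pi_mk_append, pi_mk_pos, pi_mk_inv, pi_mk_neg]
      try rw [← hg, ← hs, ← hs1]
      try group
    have hγ4pos : DPos (g * s * g⁻¹ * s1⁻¹) := by
      refine ⟨i, hW4 ▸ ipos_of_word i W4 ?_ ?_⟩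
      · intro l hl
        rw [hW4def] at hl
        simp only [List.mem_append, List.mem_singleton] at hl
        rcases hl with hl | (rfl | (hl | rfl))
        · exact ⟨(hAle l hl).1, fun h => absurd h (hAle l hl).2⟩
        · exact ⟨le_refl i, fun _ => rfl⟩
        · exact ⟨(hiA l hl).1, fun h => absurd h (hiA l hl).2⟩
        · exact ⟨hi0le, fun h => absurd h hi0ne⟩
      · exact ⟨(i, true), by rw [hW4def]; simp, rfl⟩
    have hγ4mem : g * s * g⁻¹ * s1⁻¹ ∈ commutator (BraidGroup n) :=
      conj_form_mem h0 g s (sig_diff_mem h0 i)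
    have hd : (g * s * g⁻¹ * s1⁻¹)⁻¹ * β = s1 * (g * b) := by
      rw [hβeq]; group
    by_cases hBex : ∃ l ∈ B, l.1 = i
    · -- other i-letters remain : γ4 works
      refine ⟨g * s * g⁻¹ * s1⁻¹, hγ4mem, hγ4pos, ?_⟩
      rw [hd]
      set Wd : List (Fin (n - 1) × Bool) := [(i0, true)] ++ (A ++ B) with hWddef
      have hWd : pib (n - 1) (FreeGroup.mk Wd) = s1 * (g * b) := by
        rw [hWddef, pi_mk_append, pi_mk_append, pi_mk_pos]
        try rw [← hg, ← hb, ← hs1]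
      refine ⟨i, hWd ▸ ipos_of_word i Wd ?_ ?_⟩
      · intro l hl
        rw [hWddef] at hl
        simp only [List.mem_append, List.mem_singleton] at hl
        rcases hl with rfl | (hl | hl)
        · exact ⟨hi0le, fun h => absurd h hi0ne⟩
        · exact ⟨(hAle l hl).1, fun h => absurd h (hAle l hl).2⟩
        · exact hBle l hl
      · rcases hBex with ⟨l, hl, hli⟩
        exact ⟨l, by rw [hWddef]; simp [hl], hli⟩
    · push_neg at hBex
      have hdmem : s1 * (g * b) ∈ commutator (BraidGroup n) := by
        rw [← hd]; exact mul_mem (inv_mem hγ4mem) hβ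
      rcases htri (s1 * (g * b)) with ⟨hd1, -, -⟩ | ⟨hdp, -, -⟩ | ⟨hdn, -, -⟩
      · -- d = 1 : use the braid relation trick
        have hbval : b = g⁻¹ * s1⁻¹ := by
          calc b = g⁻¹ * s1⁻¹ * (s1 * (g * b)) := by group
          _ = g⁻¹ * s1⁻¹ * 1 := by rw [hd1]
          _ = g⁻¹ * s1⁻¹ := by group
        have hit : (i : ℕ) - 1 < n - 1 := by omega
        set it : Fin (n - 1) := ⟨(i : ℕ) - 1, hit⟩ with hitdef
        set t : BraidGroup n := PresentedGroup.of it with ht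
        have hrel : t * s * t = s * t * s := braid2 it i (by simp [hitdef]; omega)
        have hrel2 : t⁻¹ * s⁻¹ * t * s = s * t⁻¹ := by
          calc t⁻¹ * s⁻¹ * t * s = t⁻¹ * s⁻¹ * ((t * s * t) * t⁻¹) := by group
          _ = t⁻¹ * s⁻¹ * ((s * t * s) * t⁻¹) := by rw [hrel]
          _ = s * t⁻¹ := by group
        have hitle : it ≤ i := by
          rw [Fin.le_def]
          show (i : ℕ) - 1 ≤ (i : ℕ)
          omega
        have hitne : it ≠ i := by
          intro h
          have := congrArg Fin.val h
          simp [hitdef] at this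
          omega
        set W3 : List (Fin (n - 1) × Bool) :=
          A ++ ([(it, false)] ++ ([(i, true)] ++ ([(it, true)] ++
            (FreeGroup.invRev A ++ [(i0, false)])))) with hW3def
        have hW3 : pib (n - 1) (FreeGroup.mk W3) = g * t⁻¹ * s * t * g⁻¹ * s1⁻¹ := by
          rw [hW3def, pi_mk_append, pi_mk_append, pi_mk_append, pi_mk_append, pi_mk_append,
            pi_mk_pos, pi_mk_pos, pi_mk_neg, pi_mk_neg, pi_mk_inv]
          try rw [← hg, ← hs, ← hs1, ← ht]
          try group
        have hγ3pos : DPos (g * t⁻¹ * s * t * g⁻¹ * s1⁻¹) := by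
          refine ⟨i, hW3 ▸ ipos_of_word i W3 ?_ ?_⟩
          · intro l hl
            rw [hW3def] at hl
            simp only [List.mem_append, List.mem_singleton] at hl
            rcases hl with hl | (rfl | (rfl | (rfl | (hl | rfl))))
            · exact ⟨(hAle l hl).1, fun h => absurd h (hAle l hl).2⟩
            · exact ⟨hitle, fun h => absurd h hitne⟩
            · exact ⟨le_refl i, fun _ => rfl⟩
            · exact ⟨hitle, fun h => absurd h hitne⟩
            · exact ⟨(hiA l hl).1, fun h => absurd h (hiA l hl).2⟩
            · exact ⟨hi0le, fun h => absurd h hi0ne⟩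
          · exact ⟨(i, true), by rw [hW3def]; simp, rfl⟩
        have hγ3mem : g * t⁻¹ * s * t * g⁻¹ * s1⁻¹ ∈ commutator (BraidGroup n) := by
          have hform : (g * t⁻¹) * s * (g * t⁻¹)⁻¹ * s1⁻¹ =
              g * t⁻¹ * s * t * g⁻¹ * s1⁻¹ := by group
          exact hform ▸ conj_form_mem h0 (g * t⁻¹) s (sig_diff_mem h0 i)
        refine ⟨g * t⁻¹ * s * t * g⁻¹ * s1⁻¹, hγ3mem, hγ3pos, ?_⟩
        have hq : (g * t⁻¹ * s * t * g⁻¹ * s1⁻¹)⁻¹ * β =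
            s1 * (g * ((s * t⁻¹) * (g⁻¹ * s1⁻¹))) := by
          rw [hβeq, hbval, ← hrel2]; group
        rw [hq]
        set Wq : List (Fin (n - 1) × Bool) :=
          [(i0, true)] ++ (A ++ ([(i, true)] ++ ([(it, false)] ++
            (FreeGroup.invRev A ++ [(i0, false)])))) with hWqdef
        have hWq : pib (n - 1) (FreeGroup.mk Wq) =
            s1 * (g * ((s * t⁻¹) * (g⁻¹ * s1⁻¹))) := by
          rw [hWqdef, pi_mk_append, pi_mk_append, pi_mk_append, pi_mk_append, pi_mk_append,
            pi_mk_pos, pi_mk_pos, pi_mk_neg, pi_mk_neg, pi_mk_inv]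
          try rw [← hg, ← hs, ← hs1, ← ht]
          try group
        refine ⟨i, hWq ▸ ipos_of_word i Wq ?_ ?_⟩
        · intro l hl
          rw [hWqdef] at hl
          simp only [List.mem_append, List.mem_singleton] at hl
          rcases hl with rfl | (hl | (rfl | (rfl | (hl | rfl))))
          · exact ⟨hi0le, fun h => absurd h hi0ne⟩
          · exact ⟨(hAle l hl).1, fun h => absurd h (hAle l hl).2⟩
          · exact ⟨le_refl i, fun _ => rfl⟩
          · exact ⟨hitle, fun h => absurd h hitne⟩
          · exact ⟨(hiA l hl).1, fun h => absurd h (hiA l hl).2⟩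
          · exact ⟨hi0le, fun h => absurd h hi0ne⟩
        · exact ⟨(i, true), by rw [hWqdef]; simp, rfl⟩
      · -- d positive : γ4 works
        refine ⟨g * s * g⁻¹ * s1⁻¹, hγ4mem, hγ4pos, ?_⟩
        rw [hd]; exact hdp
      · -- d negative : d⁻¹ works
        refine ⟨(s1 * (g * b))⁻¹, inv_mem hdmem, hdn, ?_⟩
        have he : ((s1 * (g * b))⁻¹)⁻¹ * β = s1 * (g * (b * (g * (s * b)))) := by
          rw [hβeq]; group
        rw [he]
        set We : List (Fin (n - 1) × Bool) :=
          [(i0, true)] ++ (A ++ (B ++ (A ++ ([(i, true)] ++ B)))) with hWedef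
        have hWe : pib (n - 1) (FreeGroup.mk We) = s1 * (g * (b * (g * (s * b)))) := by
          rw [hWedef, pi_mk_append, pi_mk_append, pi_mk_append, pi_mk_append, pi_mk_append,
            pi_mk_pos, pi_mk_pos]
          try rw [← hg, ← hb, ← hs, ← hs1]
        refine ⟨i, hWe ▸ ipos_of_word i We ?_ ?_⟩
        · intro l hl
          rw [hWedef] at hl
          simp only [List.mem_append, List.mem_singleton] at hl
          rcases hl with rfl | (hl | (hl | (hl | (rfl | hl))))
          · exact ⟨hi0le, fun h => absurd h hi0ne⟩
          · exact ⟨(hAle l hl).1, fun h => absurd h (hAle l hl).2⟩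
          · exact ⟨(hBle l hl).1, fun h => absurd h (hBex l hl)⟩
          · exact ⟨(hAle l hl).1, fun h => absurd h (hAle l hl).2⟩
          · exact ⟨le_refl i, fun _ => rfl⟩
          · exact ⟨(hBle l hl).1, fun h => absurd h (hBex l hl)⟩
        · exact ⟨(i, true), by rw [hWedef]; simp, rfl⟩

end BraidAux

/-- For `n ≥ 3`, the commutator subgroup `[B_n, B_n]` has no least positive element in the
Dehornoy ordering; hence the restricted order is dense. -/
theorem stmt_15 {n : ℕ} (hn : 3 ≤ n)
    (hmul : ∀ a b : BraidGroup n, DPos a → DPos b → DPos (a * b))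
    (htri : ∀ a : BraidGroup n,
      (a = 1 ∧ ¬DPos a ∧ ¬DPos a⁻¹) ∨ (DPos a ∧ a ≠ 1 ∧ ¬DPos a⁻¹) ∨
      (DPos a⁻¹ ∧ a ≠ 1 ∧ ¬DPos a)) :
    (¬ ∃ β : BraidGroup n, β ∈ commutator (BraidGroup n) ∧ DPos β ∧
      ∀ γ : BraidGroup n, γ ∈ commutator (BraidGroup n) → DPos γ → γ = β ∨ DLt β γ) ∧
    ∀ f g : BraidGroup n, f ∈ commutator (BraidGroup n) → g ∈ commutator (BraidGroup n) →
      DLt f g → ∃ h : BraidGroup n, h ∈ commutator (BraidGroup n) ∧ DLt f h ∧ DLt h g := by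
  have hnd1 : ¬ DPos (1 : BraidGroup n) := by
    rcases htri 1 with ⟨-, h, -⟩ | ⟨-, h, -⟩ | ⟨-, h, -⟩
    · exact h
    · exact absurd rfl h
    · exact absurd rfl h
  constructor
  · rintro ⟨β, hβmem, hβpos, hmin⟩
    obtain ⟨γ, hγmem, hγpos, hγlt⟩ := BraidAux.core hn htri hβmem hβpos
    rcases hmin γ hγmem hγpos with rfl | hlt
    · rw [inv_mul_cancel] at hγlt
      exact hnd1 hγlt
    · have hcomb := hmul _ _ hlt hγlt
      rw [show (β⁻¹ * γ) * (γ⁻¹ * β) = 1 by group] at hcomb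
      exact hnd1 hcomb
  · intro f g hf hg hfg
    have hfg' : DPos (f⁻¹ * g) := hfg
    have hmem : f⁻¹ * g ∈ commutator (BraidGroup n) := mul_mem (inv_mem hf) hg
    obtain ⟨γ, hγmem, hγpos, hγlt⟩ := BraidAux.core hn htri hmem hfg'
    refine ⟨f * γ, mul_mem hf hγmem, ?_, ?_⟩
    · show DPos (f⁻¹ * (f * γ))
      rw [show f⁻¹ * (f * γ) = γ by group]
      exact hγpos
    · show DPos ((f * γ)⁻¹ * g)
      rw [show (f * γ)⁻¹ * g = γ⁻¹ * (f⁻¹ * g) by group]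
      exact hγlt
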